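/- Let m ≥ 2, let M be an m × m diagonal integer matrix with nonzero determinant and first diagonal entry M₁₁, regarded as an injective endomorphism of ℤᵐ, and let G = ℤᵐ ∗_M be the corresponding ascending HNN-extension with stable letter t and canonical embedding of : ℤᵐ → G. Let e₁ ∈ ℤᵐ be the first standard basis vector. Then there is an injective group homomorphism from the Baumslag–Solitar group BS(1, M₁₁) = ⟨a, s ∣ s⁻¹ a s = a^{M₁₁}⟩ into G sending a ↦ of(e₁) and s ↦ t, whose image is the subgroup ⟨of(e₁), t⟩ of G; in particular, ⟨of(e₁), t⟩ ≅ BS(1, M₁₁). -/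

import Mathlib

/-- The ascending HNN-extension `G∗_φ` of a group `G` along an injective endomorphism
`φ : G → G`: the HNN extension of `G` with associated subgroups `φ.range` and `⊤`, with
the isomorphism `φ.range ≃* ⊤` induced by `φ`, so that the defining relation is
`t⁻¹ g t = φ g` for all `g ∈ G` (`of : G → G∗_φ` is the canonical embedding and `t` the
stable letter). -/
noncomputable abbrev AscendingHNN {G : Type} [Group G] (φ : G →* G)
    (hφ : Function.Injective φ) : Type :=
  HNNExtension G φ.range ⊤ ((Subgroup.topEquiv.trans (MonoidHom.ofInjective hφ)).symm)

/-- The endomorphism of the free-abelian group `ℤᵐ` (written multiplicatively as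
`Multiplicative (Fin m → ℤ)`) induced by an `m × m` integer matrix `M`, `u ↦ u M`. -/
def matHom {m : ℕ} (M : Matrix (Fin m) (Fin m) ℤ) :
    Multiplicative (Fin m → ℤ) →* Multiplicative (Fin m → ℤ) :=
  AddMonoidHom.toMultiplicative (Matrix.vecMulLinear M).toAddMonoidHom

/-- The single relator `s⁻¹ a s a⁻ⁿ` of the Baumslag–Solitar group `BS(1, n)`, `n : ℤ`,
where `a = FreeGroup.of true` and `s = FreeGroup.of false`. -/
def BSRels (n : ℤ) : Set (FreeGroup Bool) :=
  {(FreeGroup.of false)⁻¹ * FreeGroup.of true * FreeGroup.of false *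
    (FreeGroup.of true ^ n)⁻¹}

/-- The Baumslag–Solitar group `BS(1, n) = ⟨a, s ∣ s⁻¹ a s = aⁿ⟩`, presented as the
quotient of the free group on two generators by the normal closure of `s⁻¹ a s a⁻ⁿ`. -/
def BS (n : ℤ) : Type := PresentedGroup (BSRels n)

instance (n : ℤ) : Group (BS n) := by unfold BS; infer_instance

section Asc

variable {G H : Type} [Group G] [Group H]

theorem asc_key {φ : G →* G} (hφ : Function.Injective φ) (g : G) :
    ((((Subgroup.topEquiv.trans (MonoidHom.ofInjective hφ)).symm)
      (⟨φ g, ⟨g, rfl⟩⟩ : φ.range) : (⊤ : Subgroup G)) : G) = g :=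
  hφ (MonoidHom.apply_ofInjective_symm hφ ⟨φ g, ⟨g, rfl⟩⟩)

theorem asc_t_mul (φ : G →* G) (hφ : Function.Injective φ) (g : G) :
    (HNNExtension.t * HNNExtension.of (φ g) : AscendingHNN φ hφ) =
      HNNExtension.of g * HNNExtension.t := by
  have h := HNNExtension.t_mul_of
    (φ := (Subgroup.topEquiv.trans (MonoidHom.ofInjective hφ)).symm)
    (⟨φ g, ⟨g, rfl⟩⟩ : φ.range)
  rw [asc_key hφ g] at h
  exact h

theorem asc_conj (φ : G →* G) (hφ : Function.Injective φ) (g : G) :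
    ((HNNExtension.t)⁻¹ * HNNExtension.of g * HNNExtension.t : AscendingHNN φ hφ) =
      HNNExtension.of (φ g) := by
  have h := asc_t_mul φ hφ g
  rw [mul_assoc, ← h]; group

/-- lift out of an ascending HNN extension -/
noncomputable def ascLift (φ : G →* G) (hφ : Function.Injective φ) (F : G →* H) (x : H)
    (hx : ∀ g, x * F (φ g) = F g * x) : AscendingHNN φ hφ →* H :=
  HNNExtension.lift F x (by
    rintro ⟨-, g, rfl⟩
    rw [asc_key hφ g]
    exact hx g)

@[simp] theorem ascLift_of (φ : G →* G) (hφ : Function.Injective φ) (F : G →* H) (x : H)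
    (hx : ∀ g, x * F (φ g) = F g * x) (g : G) :
    ascLift φ hφ F x hx (HNNExtension.of g) = F g :=
  HNNExtension.lift_of _ _ _ _

@[simp] theorem ascLift_t (φ : G →* G) (hφ : Function.Injective φ) (F : G →* H) (x : H)
    (hx : ∀ g, x * F (φ g) = F g * x) :
    ascLift φ hφ F x hx HNNExtension.t = x :=
  HNNExtension.lift_t _ _ _

end Asc

section BSlemmas

theorem bs_rel (n : ℤ) :
    (PresentedGroup.of false : BS n)⁻¹ * PresentedGroup.of true * PresentedGroup.of false =
      (PresentedGroup.of true : BS n) ^ n := by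
  have h : (PresentedGroup.mk (BSRels n))
      ((FreeGroup.of false)⁻¹ * FreeGroup.of true * FreeGroup.of false *
        (FreeGroup.of true ^ n)⁻¹) = 1 := by
    apply (QuotientGroup.eq_one_iff _).2
    exact Subgroup.subset_normalClosure rfl
  rw [map_mul, map_mul, map_mul, map_inv, map_inv, map_zpow] at h
  exact mul_inv_eq_one.mp h

theorem bs_conj (n z : ℤ) :
    (PresentedGroup.of true : BS n) ^ z * PresentedGroup.of false =
      PresentedGroup.of false * (PresentedGroup.of true : BS n) ^ (n * z) := by
  set a : BS n := PresentedGroup.of true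
  set s : BS n := PresentedGroup.of false
  have h3 : s⁻¹ * a ^ z * s = a ^ (n * z) := by
    rw [zpow_mul, show a ^ n = s⁻¹ * a * s from (bs_rel n).symm]
    calc s⁻¹ * a ^ z * s = s⁻¹ * a ^ z * s⁻¹⁻¹ := by rw [inv_inv]
      _ = (s⁻¹ * a * s⁻¹⁻¹) ^ z := (conj_zpow).symm
      _ = (s⁻¹ * a * s) ^ z := by rw [inv_inv]
  exact (by rw [← h3]; group : a ^ z * s = s * a ^ (n * z))

end BSlemmas

/-- Let `m ≥ 2`, let `M` be an `m × m` diagonal integer matrix with nonzero determinant,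
regarded as an injective endomorphism of `ℤᵐ`, let `G = ℤᵐ ∗_M`, and let `e₁` be the
first standard basis vector of `ℤᵐ`. Then there is an injective group homomorphism
`BS(1, M₁₁) → G` sending `a ↦ of(e₁)` and `s ↦ t`, whose image is the subgroup
`⟨of(e₁), t⟩` of `G`; in particular `⟨of(e₁), t⟩ ≅ BS(1, M₁₁)`. -/
theorem bs_embeds_in_ascendingHNN_freeAbelian (m : ℕ) (hm : 2 ≤ m)
    (M : Matrix (Fin m) (Fin m) ℤ) (hdiag : M.IsDiag) (hdet : M.det ≠ 0)
    (hinj : Function.Injective (matHom M)) :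
    ∃ ψ : BS (M ⟨0, by omega⟩ ⟨0, by omega⟩) →* AscendingHNN (matHom M) hinj,
      Function.Injective ψ ∧
      ψ (PresentedGroup.of true) =
        HNNExtension.of
          (Multiplicative.ofAdd (Pi.single (⟨0, by omega⟩ : Fin m) 1 : Fin m → ℤ)) ∧
      ψ (PresentedGroup.of false) = HNNExtension.t ∧
      ψ.range = Subgroup.closure
        {HNNExtension.of
            (Multiplicative.ofAdd (Pi.single (⟨0, by omega⟩ : Fin m) 1 : Fin m → ℤ)),
          HNNExtension.t} := by
  have hm0 : 0 < m := by omega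
  set i0 : Fin m := (⟨0, by omega⟩ : Fin m) with hi0
  set n : ℤ := M i0 i0 with hn0
  -- the diagonal entry is nonzero
  have hn : n ≠ 0 := by
    intro h
    apply hdet
    rw [← hdiag.diagonal_diag, Matrix.det_diagonal]
    exact Finset.prod_eq_zero (Finset.mem_univ i0) h
  have hmat : ∀ v : Fin m → ℤ, matHom M (Multiplicative.ofAdd v) =
      Multiplicative.ofAdd (Matrix.vecMul v M) := fun v => rfl
  have hvec : ∀ v : Fin m → ℤ, Matrix.vecMul v M i0 = v i0 * n := by
    intro v
    show (Finset.univ.sum fun i => v i * M i i0) = v i0 * n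
    rw [Finset.sum_eq_single i0]
    · intro b _ hb
      rw [hdiag hb, mul_zero]
    · intro h; exact absurd (Finset.mem_univ i0) h
  have hsingle : ∀ c : ℤ, Matrix.vecMul (Pi.single i0 c) M = Pi.single i0 (c * n) := by
    intro c
    rw [Matrix.single_vecMul]
    funext j
    by_cases hj : j = i0
    · subst hj; simp [Pi.single_apply, hn0]
    · show c * M i0 j = (Pi.single i0 (c * n) : Fin m → ℤ) j
      rw [hdiag (Ne.symm hj)]
      simp [Pi.single_apply, hj]
  set e₁ : Multiplicative (Fin m → ℤ) :=
    Multiplicative.ofAdd (Pi.single i0 1 : Fin m → ℤ) with he₁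
  have hsingle_n : (Pi.single i0 1 : Fin m → ℤ) i0 = 1 := Pi.single_eq_same i0 1
  have hφe : matHom M e₁ = e₁ ^ n := by
    rw [he₁, hmat, hsingle, one_mul]
    apply Multiplicative.toAdd.injective
    rw [toAdd_zpow]
    funext j
    by_cases hj : j = i0 <;> simp [Pi.single_apply, hj]
  -- the homomorphism ψ
  set oe : AscendingHNN (matHom M) hinj := HNNExtension.of e₁ with hoe
  set f : Bool → AscendingHNN (matHom M) hinj :=
    (fun b => cond b oe HNNExtension.t) with hf
  have hrels : ∀ r ∈ BSRels n, FreeGroup.lift f r = 1 := by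
    intro r hr
    have hr' := Set.eq_of_mem_singleton hr
    subst hr'
    rw [map_mul, map_mul, map_mul, map_inv, map_inv, map_zpow,
      FreeGroup.lift_apply_of, FreeGroup.lift_apply_of]
    show HNNExtension.t⁻¹ * oe * HNNExtension.t * (oe ^ n)⁻¹ = 1
    rw [hoe, asc_conj (matHom M) hinj e₁, hφe, map_zpow, mul_inv_cancel]
  set ψ : BS n →* AscendingHNN (matHom M) hinj := PresentedGroup.toGroup hrels with hψ
  have hψa : ψ (PresentedGroup.of true) = oe := PresentedGroup.toGroup.of hrels
  have hψs : ψ (PresentedGroup.of false) = HNNExtension.t := PresentedGroup.toGroup.of hrels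
  -- the retraction data
  set proj : Multiplicative (Fin m → ℤ) →* Multiplicative ℤ :=
    AddMonoidHom.toMultiplicative (Pi.evalAddMonoidHom (fun _ : Fin m => ℤ) i0) with hproj
  set ν : Multiplicative ℤ →* Multiplicative ℤ := zpowGroupHom n with hν0
  have hν : Function.Injective ν := by
    intro x y h
    have hx := congrArg Multiplicative.toAdd h
    rw [hν0, zpowGroupHom_apply, zpowGroupHom_apply, toAdd_zpow, toAdd_zpow,
      smul_eq_mul, smul_eq_mul] at hx
    exact Multiplicative.toAdd.injective (mul_left_cancel₀ hn hx)
  have hcomm : ∀ u, proj (matHom M u) = ν (proj u) := by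
    intro u
    apply Multiplicative.toAdd.injective
    show Matrix.vecMul (Multiplicative.toAdd u) M i0 =
      Multiplicative.toAdd (proj u ^ n)
    rw [toAdd_zpow, hvec, smul_eq_mul, mul_comm]
    rfl
  set π : AscendingHNN (matHom M) hinj →* AscendingHNN ν hν :=
    ascLift (matHom M) hinj
      ((HNNExtension.of : Multiplicative ℤ →* AscendingHNN ν hν).comp proj)
      HNNExtension.t
      (by
        intro g
        show HNNExtension.t * HNNExtension.of (proj (matHom M g)) =
          HNNExtension.of (proj g) * HNNExtension.t
        rw [hcomm g]
        exact asc_t_mul ν hν (proj g)) with hπ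
  set θ : AscendingHNN ν hν →* BS n :=
    ascLift ν hν (zpowersHom (BS n) (PresentedGroup.of true)) (PresentedGroup.of false)
      (by
        intro z
        show PresentedGroup.of false * (PresentedGroup.of true : BS n) ^
            Multiplicative.toAdd (z ^ n) =
          (PresentedGroup.of true : BS n) ^ Multiplicative.toAdd z *
            PresentedGroup.of false
        rw [toAdd_zpow, smul_eq_mul]
        exact (bs_conj n (Multiplicative.toAdd z)).symm) with hθ
  -- the composite is the identity
  have hproje : proj e₁ = Multiplicative.ofAdd 1 := by
    apply Multiplicative.toAdd.injective
    exact hsingle_n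
  have hid : ∀ x : BS n, θ (π (ψ x)) = x := by
    intro x
    have hext : (θ.comp π).comp ψ = MonoidHom.id (BS n) := by
      apply PresentedGroup.ext
      intro b
      cases b
      · show θ (π (ψ (PresentedGroup.of false))) = PresentedGroup.of false
        rw [hψs, hπ, ascLift_t, hθ]; exact ascLift_t _ _ _ _ _
      · show θ (π (ψ (PresentedGroup.of true))) = PresentedGroup.of true
        rw [hψa, hoe, hπ, ascLift_of]
        show θ (HNNExtension.of (proj e₁)) = PresentedGroup.of true
        rw [hproje, hθ]; refine (ascLift_of _ _ _ _ _ _).trans ?_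
        show (PresentedGroup.of true : BS n) ^ (1 : ℤ) = PresentedGroup.of true
        rw [zpow_one]
    exact DFunLike.congr_fun hext x
  have hinjψ : Function.Injective ψ := by
    intro x y h
    have := congrArg (fun z => θ (π z)) h
    simpa [hid] using this
  -- the range
  have hrange : ψ.range = Subgroup.closure {oe, HNNExtension.t} := by
    apply le_antisymm
    · rintro x ⟨y, rfl⟩
      refine PresentedGroup.generated_by (BSRels n)
        (Subgroup.comap ψ (Subgroup.closure {oe, HNNExtension.t})) ?_ y
      intro j
      cases j
      · show ψ (PresentedGroup.of false) ∈ Subgroup.closure {oe, HNNExtension.t}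
        rw [hψs]
        exact Subgroup.subset_closure (Or.inr rfl)
      · show ψ (PresentedGroup.of true) ∈ Subgroup.closure {oe, HNNExtension.t}
        rw [hψa]
        exact Subgroup.subset_closure (Or.inl rfl)
    · rw [Subgroup.closure_le]
      rintro x (rfl | rfl)
      · exact ⟨PresentedGroup.of true, hψa⟩
      · exact ⟨PresentedGroup.of false, hψs⟩
  exact ⟨ψ, hinjψ, hψa, hψs, hrange⟩
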